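/- Let φ : [0,1] → ℝ be strictly positive and of class C¹. Define the secant function S[φ] on [0,1]² by S[φ](x,y) = (1/(y−x))·∫_x^y φ(t) dt for x ≠ y, and S[φ](x,x) = φ(x). Then S[φ] is of class C¹ on [0,1]², and the sup norm of its total derivative is bounded by ‖φ′‖_∞. -/

import Mathlib

open Filter Topology Set

section aux
variable {φ : ℝ → ℝ}

-- continuous extension of the derivative
noncomputable def gext (φ : ℝ → ℝ) : ℝ → ℝ :=
  fun s => derivWithin φ (Icc 0 1) (projIcc (0:ℝ) 1 zero_le_one s)

lemma gext_eq (s : ℝ) (hs : s ∈ Icc (0:ℝ) 1) :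
    gext φ s = derivWithin φ (Icc 0 1) s := by
  simp [gext, projIcc_of_mem zero_le_one hs]

lemma gext_cont (hφ : ContDiffOn ℝ 1 φ (Icc 0 1)) : Continuous (gext φ) := by
  have h1 : ContinuousOn (derivWithin φ (Icc 0 1)) (Icc 0 1) :=
    hφ.continuousOn_derivWithin (uniqueDiffOn_Icc one_pos) le_rfl
  exact h1.comp_continuous (continuous_subtype_val.comp (continuous_projIcc))
    (fun s => (projIcc (0:ℝ) 1 zero_le_one s).2)

noncomputable def psiext (φ : ℝ → ℝ) : ℝ → ℝ :=
  fun x => φ 0 + ∫ s in (0:ℝ)..x, gext φ s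

lemma psiext_hasDerivAt (hφ : ContDiffOn ℝ 1 φ (Icc 0 1)) (x : ℝ) :
    HasDerivAt (psiext φ) (gext φ x) x :=
  (((gext_cont hφ).integral_hasStrictDerivAt 0 x).hasDerivAt).const_add (φ 0)

lemma psiext_eq (hφ : ContDiffOn ℝ 1 φ (Icc 0 1)) :
    ∀ x ∈ Icc (0:ℝ) 1, psiext φ x = φ x := by
  apply eq_of_derivWithin_eq
  · exact fun x _ => ((psiext_hasDerivAt hφ x).differentiableAt).differentiableWithinAt
  · exact hφ.differentiableOn one_ne_zero
  · intro x hx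
    have hx' : x ∈ Icc (0:ℝ) 1 := mem_Icc_of_Ico hx
    have := (psiext_hasDerivAt hφ x).hasDerivWithinAt (s := Icc (0:ℝ) 1)
    rw [this.derivWithin ((uniqueDiffOn_Icc one_pos) x hx')]
    exact gext_eq x hx'
  · simp [psiext]

end aux
open Filter Topology Set MeasureTheory intervalIntegral ContinuousLinearMap

noncomputable def Amap (t : ℝ) : ℝ × ℝ →L[ℝ] ℝ :=
  (1 - t) • (fst ℝ ℝ ℝ) + t • (snd ℝ ℝ ℝ)

lemma Amap_apply (t : ℝ) (v : ℝ × ℝ) : Amap t v = (1 - t) * v.1 + t * v.2 := by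
  simp [Amap]

lemma Amap_cont : Continuous Amap := by
  unfold Amap
  exact ((continuous_const.sub continuous_id).smul continuous_const).add
    (continuous_id.smul continuous_const)

lemma Amap_norm_le (t : ℝ) : ‖Amap t‖ ≤ |1 - t| + |t| := by
  apply opNorm_le_bound _ (by positivity)
  intro v
  rw [Amap_apply]
  have h1 : |v.1| ≤ ‖v‖ := norm_fst_le v
  have h2 : |v.2| ≤ ‖v‖ := norm_snd_le v
  calc |(1 - t) * v.1 + t * v.2| ≤ |(1 - t) * v.1| + |t * v.2| := abs_add_le _ _
    _ = |1 - t| * |v.1| + |t| * |v.2| := by rw [abs_mul, abs_mul]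
    _ ≤ |1 - t| * ‖v‖ + |t| * ‖v‖ := by gcongr
    _ = (|1 - t| + |t|) * ‖v‖ := by ring

section
variable {g ψ : ℝ → ℝ} (hg : Continuous g) (hψd : ∀ x, HasDerivAt ψ (g x) x)
  {C : ℝ} (hC : ∀ s, |g s| ≤ C)

lemma affine_hasFDerivAt (t : ℝ) (p : ℝ × ℝ) :
    HasFDerivAt (fun x : ℝ × ℝ => x.1 + t * (x.2 - x.1)) (Amap t) p := by
  have he : (fun x : ℝ × ℝ => x.1 + t * (x.2 - x.1)) = fun x => Amap t x := by
    funext x; rw [Amap_apply]; ring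
  rw [he]
  exact (Amap t).hasFDerivAt

include hg hψd hC in
lemma T_hasFDerivAt (p : ℝ × ℝ) :
    HasFDerivAt (fun q : ℝ × ℝ => ∫ t in (0:ℝ)..1, ψ (q.1 + t * (q.2 - q.1)))
      (∫ t in (0:ℝ)..1, g (p.1 + t * (p.2 - p.1)) • Amap t) p := by
  have hψc : Continuous ψ := continuous_iff_continuousAt.2 fun x => (hψd x).continuousAt
  have haff : ∀ q : ℝ × ℝ, Continuous fun t : ℝ => q.1 + t * (q.2 - q.1) := fun q => by
    continuity
  apply intervalIntegral.hasFDerivAt_integral_of_dominated_of_fderiv_le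
    (F' := fun (q : ℝ × ℝ) (t : ℝ) => g (q.1 + t * (q.2 - q.1)) • Amap t)
    (bound := fun _ => 2 * (|C| + 1)) (Metric.ball_mem_nhds p one_pos)
  · filter_upwards with q
    exact ((hψc.comp (haff q)).aestronglyMeasurable)
  · exact (hψc.comp (haff p)).intervalIntegrable 0 1
  · apply Continuous.aestronglyMeasurable
    exact ((hg.comp (haff p)).smul Amap_cont)
  · filter_upwards with t
    intro ht q _
    have ht' : t ∈ Ioc (0:ℝ) 1 := by rwa [uIoc_of_le zero_le_one] at ht
    calc ‖g (q.1 + t * (q.2 - q.1)) • Amap t‖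
        = |g (q.1 + t * (q.2 - q.1))| * ‖Amap t‖ := by
          rw [show |g (q.1 + t * (q.2 - q.1))| = ‖g (q.1 + t * (q.2 - q.1))‖ from rfl,
            ← norm_smul]
      _ ≤ (|C| + 1) * (|1 - t| + |t|) := by
          apply mul_le_mul _ (Amap_norm_le t) (norm_nonneg _) (by positivity)
          exact (hC _).trans ((le_abs_self C).trans (by linarith))
      _ ≤ 2 * (|C| + 1) := by
          rw [abs_of_nonneg (by linarith [ht'.2] : (0:ℝ) ≤ 1 - t),
            abs_of_nonneg ht'.1.le]
          nlinarith [abs_nonneg C, ht'.1.le, ht'.2]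
  · exact intervalIntegrable_const
  · filter_upwards with t ht q _
    exact (hψd (q.1 + t * (q.2 - q.1))).comp_hasFDerivAt q (affine_hasFDerivAt t q)

end

section
variable {g ψ : ℝ → ℝ} (hg : Continuous g) (hψd : ∀ x, HasDerivAt ψ (g x) x)
  {C : ℝ} (hC : ∀ s, |g s| ≤ C)

include hg hψd hC in
lemma T_contDiff :
    ContDiff ℝ 1 (fun q : ℝ × ℝ => ∫ t in (0:ℝ)..1, ψ (q.1 + t * (q.2 - q.1))) := by
  rw [contDiff_one_iff_fderiv]
  refine ⟨fun p => (T_hasFDerivAt hg hψd hC p).differentiableAt, ?_⟩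
  have he : (fderiv ℝ fun q : ℝ × ℝ => ∫ t in (0:ℝ)..1, ψ (q.1 + t * (q.2 - q.1))) =
      fun p : ℝ × ℝ => ∫ t in (0:ℝ)..1, g (p.1 + t * (p.2 - p.1)) • Amap t := by
    funext p; exact (T_hasFDerivAt hg hψd hC p).fderiv
  rw [he]
  apply intervalIntegral.continuous_parametric_intervalIntegral_of_continuous' (μ := volume)
  show Continuous fun q : (ℝ × ℝ) × ℝ => g (q.1.1 + q.2 * (q.1.2 - q.1.1)) • Amap q.2
  apply Continuous.fun_smul
  · apply hg.comp
    exact (continuous_fst.comp continuous_fst).add (continuous_snd.mul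
      ((continuous_snd.comp continuous_fst).sub (continuous_fst.comp continuous_fst)))
  · exact Amap_cont.comp continuous_snd

end


/-- For a strictly positive `C¹` density `φ` on `[0,1]`, the secant
function `S[φ](x,y) = (∫_x^y φ)/(y-x)`, `S[φ](x,x) = φ(x)` is `C¹` on the square
`[0,1]²`, with `|∂S/∂x| + |∂S/∂y|` bounded by `‖φ'‖_∞`. -/
theorem stmt5 (φ : ℝ → ℝ)
    (hφ : ContDiffOn ℝ 1 φ (Icc 0 1))
    (hφpos : ∀ x ∈ Icc (0:ℝ) 1, 0 < φ x)
    (S : ℝ × ℝ → ℝ)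
    (hSoff : ∀ x y : ℝ, x ≠ y → S (x, y) = (∫ t in x..y, φ t) / (y - x))
    (hSdiag : ∀ x : ℝ, S (x, x) = φ x)
    (M : ℝ) (hM : ∀ t ∈ Icc (0:ℝ) 1, |derivWithin φ (Icc 0 1) t| ≤ M) :
    ContDiffOn ℝ 1 S (Icc 0 1 ×ˢ Icc 0 1) ∧
      ∀ q ∈ (Icc (0:ℝ) 1 ×ˢ Icc (0:ℝ) 1),
        |fderivWithin ℝ S (Icc 0 1 ×ˢ Icc 0 1) q (1, 0)| +
          |fderivWithin ℝ S (Icc 0 1 ×ˢ Icc 0 1) q (0, 1)| ≤ M := by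
  set g := gext φ with hg_def
  have hgc : Continuous g := gext_cont hφ
  set ψ := psiext φ with hψ_def
  have hψd : ∀ x, HasDerivAt ψ (g x) x := psiext_hasDerivAt hφ
  have hψφ : ∀ x ∈ Icc (0:ℝ) 1, ψ x = φ x := psiext_eq hφ
  have hψc : Continuous ψ := continuous_iff_continuousAt.2 fun x => (hψd x).continuousAt
  obtain ⟨s₀, hs₀I, hs₀⟩ : ∃ s₀ ∈ Icc (0:ℝ) 1, ∀ s ∈ Icc (0:ℝ) 1,
      |derivWithin φ (Icc 0 1) s| ≤ |derivWithin φ (Icc 0 1) s₀| :=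
    by
      obtain ⟨s₀, h₀, h₁⟩ := isCompact_Icc.exists_isMaxOn (nonempty_Icc.2 zero_le_one)
        (continuous_abs.comp_continuousOn
          (hφ.continuousOn_derivWithin (uniqueDiffOn_Icc one_pos) le_rfl))
      exact ⟨s₀, h₀, fun s hs => h₁ hs⟩
  have hC : ∀ s, |g s| ≤ |derivWithin φ (Icc 0 1) s₀| := fun s =>
    hs₀ _ (projIcc (0:ℝ) 1 zero_le_one s).2
  set T : ℝ × ℝ → ℝ := fun q => ∫ t in (0:ℝ)..1, ψ (q.1 + t * (q.2 - q.1)) with hT_def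
  have hTd : ∀ p : ℝ × ℝ, HasFDerivAt T
      (∫ t in (0:ℝ)..1, g (p.1 + t * (p.2 - p.1)) • Amap t) p :=
    T_hasFDerivAt hgc hψd hC
  have hTC : ContDiff ℝ 1 T := T_contDiff hgc hψd hC
  have hmem : ∀ {x y t : ℝ}, x ∈ Icc (0:ℝ) 1 → y ∈ Icc (0:ℝ) 1 → t ∈ Icc (0:ℝ) 1 →
      x + t * (y - x) ∈ Icc (0:ℝ) 1 := by
    intro x y t hx hy ht
    constructor <;> nlinarith [hx.1, hx.2, hy.1, hy.2, ht.1, ht.2]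
  have hST : EqOn S T (Icc 0 1 ×ˢ Icc 0 1) := by
    rintro ⟨x, y⟩ ⟨hx, hy⟩
    have hsub : uIcc x y ⊆ Icc (0:ℝ) 1 := uIcc_subset_Icc hx hy
    by_cases hxy : x = y
    · subst hxy
      have hT1 : T (x, x) = ψ x := by
        rw [hT_def]; simp
      rw [hSdiag, hT1]
      exact (hψφ x hx).symm
    · rw [hSoff x y hxy]
      have hchg : ∫ t in (0:ℝ)..1, (y - x) • ψ (x + t * (y - x)) = ∫ s in x..y, ψ s := by
        have h := intervalIntegral.integral_comp_smul_deriv (a := (0:ℝ)) (b := 1)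
          (f := fun t => x + t * (y - x)) (f' := fun _ => y - x) (g := ψ)
          (fun t _ => by simpa using ((hasDerivAt_mul_const (y - x)).const_add x))
          continuousOn_const hψc
        simp only [Function.comp] at h
        rw [show x + 0 * (y - x) = x by ring, show x + 1 * (y - x) = y by ring] at h
        exact h
      have hsmul : (y - x) • T (x, y) = ∫ s in x..y, ψ s := by
        rw [hT_def, ← intervalIntegral.integral_smul]
        exact hchg
      have hint : (∫ s in x..y, ψ s) = ∫ s in x..y, φ s :=
        intervalIntegral.integral_congr fun s hs => hψφ s (hsub hs)
      have hyx : y - x ≠ 0 := sub_ne_zero.2 fun h => hxy h.symm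
      rw [← hint, ← hsmul, smul_eq_mul, mul_div_cancel_left₀ _ hyx]
  refine ⟨hTC.contDiffOn.congr hST, ?_⟩
  rintro ⟨x, y⟩ hq
  obtain ⟨hx, hy⟩ := hq
  have hud : UniqueDiffOn ℝ (Icc (0:ℝ) 1 ×ˢ Icc (0:ℝ) 1) :=
    (uniqueDiffOn_Icc one_pos).prod (uniqueDiffOn_Icc one_pos)
  have hq' : ((x, y) : ℝ × ℝ) ∈ Icc (0:ℝ) 1 ×ˢ Icc (0:ℝ) 1 := ⟨hx, hy⟩
  have h1 : fderivWithin ℝ S (Icc 0 1 ×ˢ Icc 0 1) (x, y)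
      = fderivWithin ℝ T (Icc 0 1 ×ˢ Icc 0 1) (x, y) :=
    fderivWithin_congr hST (hST hq')
  have h2 : fderivWithin ℝ T (Icc 0 1 ×ˢ Icc 0 1) (x, y)
      = ∫ t in (0:ℝ)..1, g (x + t * (y - x)) • Amap t := by
    rw [(hTd (x, y)).differentiableAt.fderivWithin (hud _ hq')]
    exact (hTd (x, y)).fderiv
  have hFi : IntervalIntegrable (fun t => g (x + t * (y - x)) • Amap t) volume 0 1 := by
    apply Continuous.intervalIntegrable
    exact (hgc.comp (continuous_const.add (continuous_id.mul continuous_const))).smul Amap_cont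
  rw [h1, h2, ContinuousLinearMap.intervalIntegral_apply hFi (1, 0),
    ContinuousLinearMap.intervalIntegral_apply hFi (0, 1)]
  have e1 : ∫ t in (0:ℝ)..1, (g (x + t * (y - x)) • Amap t) (1, 0)
      = ∫ t in (0:ℝ)..1, (1 - t) * g (x + t * (y - x)) :=
    intervalIntegral.integral_congr fun t _ => by
      rw [ContinuousLinearMap.smul_apply, Amap_apply, smul_eq_mul]; ring
  have e2 : ∫ t in (0:ℝ)..1, (g (x + t * (y - x)) • Amap t) (0, 1)
      = ∫ t in (0:ℝ)..1, t * g (x + t * (y - x)) :=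
    intervalIntegral.integral_congr fun t _ => by
      rw [ContinuousLinearMap.smul_apply, Amap_apply, smul_eq_mul]; ring
  rw [e1, e2]
  have hgM : ∀ t ∈ Icc (0:ℝ) 1, |g (x + t * (y - x))| ≤ M := fun t ht => by
    rw [hg_def, gext_eq _ (hmem hx hy ht)]
    exact hM _ (hmem hx hy ht)
  have hgaff : Continuous fun t : ℝ => g (x + t * (y - x)) := hgc.comp (continuous_const.add (continuous_id.mul continuous_const))
  have hb1 : |∫ t in (0:ℝ)..1, (1 - t) * g (x + t * (y - x))|
      ≤ ∫ t in (0:ℝ)..1, (1 - t) * M := by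
    refine (intervalIntegral.abs_integral_le_integral_abs zero_le_one).trans ?_
    apply intervalIntegral.integral_mono_on zero_le_one
    · exact (((continuous_const.sub continuous_id).mul hgaff).abs).intervalIntegrable 0 1
    · exact ((continuous_const.sub continuous_id).mul continuous_const).intervalIntegrable 0 1
    · intro t ht
      rw [abs_mul, abs_of_nonneg (by linarith [ht.2] : (0:ℝ) ≤ 1 - t)]
      exact mul_le_mul_of_nonneg_left (hgM t ht) (by linarith [ht.2])
  have hb2 : |∫ t in (0:ℝ)..1, t * g (x + t * (y - x))|
      ≤ ∫ t in (0:ℝ)..1, t * M := by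
    refine (intervalIntegral.abs_integral_le_integral_abs zero_le_one).trans ?_
    apply intervalIntegral.integral_mono_on zero_le_one
    · exact ((continuous_id.mul hgaff).abs).intervalIntegrable 0 1
    · exact (continuous_id.mul continuous_const).intervalIntegrable 0 1
    · intro t ht
      rw [abs_mul, abs_of_nonneg ht.1]
      exact mul_le_mul_of_nonneg_left (hgM t ht) ht.1
  have hv1 : ∫ t in (0:ℝ)..1, (1 - t) * M = M / 2 := by
    have he : ∫ t in (0:ℝ)..1, (1 - t) * M = ∫ t in (0:ℝ)..1, (M - M * t) :=
      intervalIntegral.integral_congr fun t _ => by ring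
    rw [he, intervalIntegral.integral_sub intervalIntegrable_const
      ((by fun_prop : Continuous fun t : ℝ => M * t).intervalIntegrable 0 1),
      intervalIntegral.integral_const, intervalIntegral.integral_const_mul, integral_id]
    norm_num
    ring
  have hv2 : ∫ t in (0:ℝ)..1, t * M = M / 2 := by
    rw [intervalIntegral.integral_mul_const, integral_id]
    norm_num
    ring
  rw [hv1] at hb1
  rw [hv2] at hb2
  linarith
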